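/- For $d \ge 2$ and $w \ge 1$, let $P = \operatorname{conv}(0, \mathbf{e}_1, \dots, \mathbf{e}_{d-1}, -w\mathbf{e}_d) \subset \mathbb{R}^d$ and $z = \mathbf{e}_1 + \dots + \mathbf{e}_{d-1} + ((d-2)w + 1)\mathbf{e}_d$. Let $F = \operatorname{conv}(0, \mathbf{e}_1, \dots, \mathbf{e}_{d-1})$ be the horizontal facet of $P$. Then: $F$ is the only facet of $P$ visible from $z$; $\operatorname{width}_F P = w$; $\operatorname{conv}(P, z) \cap \mathbb{Z}^d = (P \cap \mathbb{Z}^d) \cup \{z\}$; and $\operatorname{ht}_P(z) = (d-2)w + 1$, which attains the general upper bound $1 + (d-2)\operatorname{width}_F P$ for quantum jumps. -/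

import Mathlib

open Set Pointwise

/-- A point of `ℝ^ι` is a lattice point if all its coordinates are integers. -/
def IsLatticePt {ι : Type} (x : ι → ℝ) : Prop := ∀ i, ∃ n : ℤ, x i = n

/-- A lattice polytope: the convex hull of a nonempty finite set of lattice points. -/
def IsLatticePolytope {ι : Type} (P : Set (ι → ℝ)) : Prop :=
  ∃ V : Set (ι → ℝ), V.Finite ∧ V.Nonempty ∧ (∀ x ∈ V, IsLatticePt x) ∧ P = convexHull ℝ V

/-- A polytope is normal if for every `c ≥ 1` each lattice point of the dilation `c • P`
is a sum of `c` lattice points of `P`. -/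
def IsNormal {ι : Type} (P : Set (ι → ℝ)) : Prop :=
  ∀ c : ℕ, 0 < c → ∀ x : ι → ℝ, x ∈ (c : ℝ) • P → IsLatticePt x →
    ∃ f : Fin c → (ι → ℝ), (∀ i, f i ∈ P ∧ IsLatticePt (f i)) ∧ x = ∑ i, f i

namespace Stmt17Aux

variable {d : ℕ} (L : Fin d) (w : ℕ)

def GenZ (q : Fin d → ℤ) : Prop :=
  (∃ k, k ≠ L ∧ q = fun j => if j = k then (1:ℤ) else 0) ∨
  (∃ t : ℕ, t ≤ w ∧ q = fun j => if j = L then -(t:ℤ) else 0) ∨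
  q = fun j => if j = L then ((d:ℤ)-2)*w+1 else 1

lemma keyP (hw : 1 ≤ w) :
    ∀ (c : ℕ) (x : Fin d → ℤ),
    (∀ i, i ≠ L → 0 ≤ x i) → x L ≤ 0 →
    (w:ℤ) * ((∑ i ∈ Finset.univ.erase L, x i) - c) ≤ x L →
    ∃ f : Fin c → (Fin d → ℤ), (∀ j, GenZ L w (f j)) ∧ x = ∑ j, f j := by
  intro c
  induction c with
  | zero =>
    intro x hA hL hB
    refine ⟨Fin.elim0, fun j => j.elim0, ?_⟩
    have hs0 : ∀ i ∈ Finset.univ.erase L, 0 ≤ x i := by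
      intro i hi; exact hA i (Finset.ne_of_mem_erase hi)
    have hsnn : 0 ≤ ∑ i ∈ Finset.univ.erase L, x i := Finset.sum_nonneg hs0
    have hws : (w:ℤ) * (∑ i ∈ Finset.univ.erase L, x i) ≤ x L := by
      simpa using hB
    have hwpos : (1:ℤ) ≤ (w:ℤ) := by exact_mod_cast hw
    have hsle : (∑ i ∈ Finset.univ.erase L, x i) ≤ 0 := by nlinarith
    have hseq : (∑ i ∈ Finset.univ.erase L, x i) = 0 := le_antisymm hsle hsnn
    have hxL : x L = 0 := by
      have := hws; rw [hseq] at this; omega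
    have hxi : ∀ i ∈ Finset.univ.erase L, x i = 0 :=
      (Finset.sum_eq_zero_iff_of_nonneg hs0).1 hseq
    funext i
    by_cases hi : i = L
    · subst hi; simpa using hxL
    · simpa using hxi i (by simp [hi])
  | succ c ih =>
    intro x hA hL hB
    by_cases hk : ∃ k, k ≠ L ∧ 1 ≤ x k
    · obtain ⟨k, hkL, hk1⟩ := hk
      set q : Fin d → ℤ := fun j => if j = k then (1:ℤ) else 0 with hq
      have hsumq : ∑ i ∈ Finset.univ.erase L, q i = 1 := by
        rw [hq]
        rw [Finset.sum_ite_eq' (Finset.univ.erase L) k (fun _ => (1:ℤ))]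
        simp [hkL]
      have hsub : ∑ i ∈ Finset.univ.erase L, (x - q) i
          = (∑ i ∈ Finset.univ.erase L, x i) - 1 := by
        simp only [Pi.sub_apply, Finset.sum_sub_distrib, hsumq]
      have hA' : ∀ i, i ≠ L → 0 ≤ (x - q) i := by
        intro i hi
        by_cases hik : i = k
        · subst hik; simp only [Pi.sub_apply, hq, if_pos rfl]; omega
        · simpa [hq, Pi.sub_apply, hik] using hA i hi
      have hL' : (x - q) L ≤ 0 := by
        simpa [hq, Pi.sub_apply, (Ne.symm hkL : L ≠ k)] using hL
      have hB' : (w:ℤ) * ((∑ i ∈ Finset.univ.erase L, (x - q) i) - c) ≤ (x - q) L := by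
        rw [hsub]
        have he : ((∑ i ∈ Finset.univ.erase L, x i) - 1 - (c:ℤ))
            = (∑ i ∈ Finset.univ.erase L, x i) - ((c:ℕ)+1 : ℕ) := by push_cast; ring
        rw [he]
        simpa [hq, Pi.sub_apply, (Ne.symm hkL : L ≠ k)] using hB
      obtain ⟨f, hf, hxf⟩ := ih (x - q) hA' hL' hB'
      refine ⟨Fin.cons q f, ?_, ?_⟩
      · intro j
        refine Fin.cases ?_ ?_ j
        · exact Or.inl ⟨k, hkL, rfl⟩
        · intro j'; simpa using hf j'
      · rw [Fin.sum_cons, ← hxf]; abel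
    · push_neg at hk
      have hxi0 : ∀ i, i ≠ L → x i = 0 := by
        intro i hi; have h1 := hk i hi; have h2 := hA i hi; omega
      have hs0 : ∑ i ∈ Finset.univ.erase L, x i = 0 :=
        Finset.sum_eq_zero (fun i hi => hxi0 i (Finset.ne_of_mem_erase hi))
      rw [hs0] at hB
      set t : ℤ := min (w:ℤ) (-(x L)) with ht
      have ht0 : 0 ≤ t := by rw [ht]; exact le_min (by positivity) (by omega)
      have htw : t ≤ (w:ℤ) := min_le_left _ _
      set q : Fin d → ℤ := fun j => if j = L then -t else 0 with hq
      have hsumq : ∑ i ∈ Finset.univ.erase L, q i = 0 := by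
        apply Finset.sum_eq_zero; intro i hi
        simp [hq, Finset.ne_of_mem_erase hi]
      have hA' : ∀ i, i ≠ L → 0 ≤ (x - q) i := by
        intro i hi; simpa [hq, Pi.sub_apply, hi] using hA i hi
      have hL' : (x - q) L ≤ 0 := by
        simp only [hq, Pi.sub_apply, if_pos rfl]
        have : t ≤ -(x L) := min_le_right _ _
        omega
      have hB' : (w:ℤ) * ((∑ i ∈ Finset.univ.erase L, (x - q) i) - c) ≤ (x - q) L := by
        have hsubq : ∑ i ∈ Finset.univ.erase L, (x - q) i = 0 := by
          simp only [Pi.sub_apply, Finset.sum_sub_distrib, hsumq, hs0]; ring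
        rw [hsubq]
        have hqL : (x - q) L = x L + t := by simp [hq]
        rw [hqL]
        have hc1 : (((c:ℕ)+1:ℕ) : ℤ) = (c:ℤ) + 1 := by push_cast; ring
        rw [hc1] at hB
        have hwc : (0:ℤ) ≤ (w:ℤ) * c := by positivity
        rcases le_total ((w:ℤ)) (-(x L)) with h | h
        · have hte : t = (w:ℤ) := min_eq_left h
          rw [hte]; nlinarith
        · have hte : t = -(x L) := min_eq_right h
          rw [hte]; nlinarith
      obtain ⟨f, hf, hxf⟩ := ih (x - q) hA' hL' hB'
      refine ⟨Fin.cons q f, ?_, ?_⟩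
      · intro j
        refine Fin.cases ?_ ?_ j
        · refine Or.inr (Or.inl ⟨t.toNat, by omega, ?_⟩)
          rw [hq]; funext j'
          by_cases hj' : j' = L <;> simp [hj', Int.toNat_of_nonneg ht0]
        · intro j'; simpa using hf j'
      · rw [Fin.sum_cons, ← hxf]; abel

lemma card_erase_univ (L : Fin d) : (Finset.univ.erase L).card = d - 1 := by
  rw [Finset.card_erase_of_mem (Finset.mem_univ L)]; simp

lemma keyQ (hd : 2 ≤ d) (hw : 1 ≤ w) :
    ∀ (c : ℕ) (x : Fin d → ℤ),
    (∀ i, i ≠ L → 0 ≤ x i) →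
    (w:ℤ) * ((∑ i ∈ Finset.univ.erase L, x i) - c) ≤ x L →
    (((d:ℤ)-2)*w+1) * ((∑ i ∈ Finset.univ.erase L, x i) - c) ≤ ((d:ℤ)-2) * x L →
    (∀ k, k ≠ L → x L ≤ (((d:ℤ)-2)*w+1) * x k) →
    ∃ f : Fin c → (Fin d → ℤ), (∀ j, GenZ L w (f j)) ∧ x = ∑ j, f j := by
  have hd2 : (0:ℤ) ≤ (d:ℤ) - 2 := by
    have : (2:ℤ) ≤ (d:ℤ) := by exact_mod_cast hd
    omega
  have hw1 : (1:ℤ) ≤ (w:ℤ) := by exact_mod_cast hw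
  have hW : (1:ℤ) ≤ ((d:ℤ)-2)*w+1 := by nlinarith
  -- summing the D inequalities
  have hDsum : ∀ (x : Fin d → ℤ), (∀ k, k ≠ L → x L ≤ (((d:ℤ)-2)*w+1) * x k) →
      ((d:ℤ) - 1) * x L ≤ (((d:ℤ)-2)*w+1) * (∑ i ∈ Finset.univ.erase L, x i) := by
    intro x hD
    have h1 : ∑ _i ∈ Finset.univ.erase L, x L ≤
        ∑ i ∈ Finset.univ.erase L, (((d:ℤ)-2)*w+1) * x i :=
      Finset.sum_le_sum (fun i hi => hD i (Finset.ne_of_mem_erase hi))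
    rw [Finset.sum_const, card_erase_univ, ← Finset.mul_sum, nsmul_eq_mul] at h1
    have hcard : ((d - 1 : ℕ) : ℤ) = (d:ℤ) - 1 := by
      have : (1:ℕ) ≤ d := by omega
      push_cast [this]; ring
    rwa [hcard] at h1
  intro c
  induction c with
  | zero =>
    intro x hA hB hC hD
    have hsum := hDsum x hD
    have hxL : x L ≤ 0 := by
      simp only [Nat.cast_zero, sub_zero] at hC
      nlinarith
    exact keyP L w hw 0 x hA hxL hB
  | succ c ih =>
    intro x hA hB hC hD
    by_cases hxL : 1 ≤ x L
    · -- subtract the point z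
      set W : ℤ := ((d:ℤ)-2)*w+1 with hWdef
      set q : Fin d → ℤ := fun j => if j = L then W else 1 with hq
      have hqL : q L = W := by simp [hq]
      have hqe : ∀ i, i ≠ L → q i = 1 := by intro i hi; simp [hq, hi]
      have hsumq : ∑ i ∈ Finset.univ.erase L, q i = (d:ℤ) - 1 := by
        rw [Finset.sum_congr rfl (fun i hi => hqe i (Finset.ne_of_mem_erase hi))]
        rw [Finset.sum_const, card_erase_univ, nsmul_eq_mul]
        have : (1:ℕ) ≤ d := by omega
        have hcast : ((d - 1 : ℕ) : ℤ) = (d:ℤ) - 1 := by omega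
        rw [hcast]; ring
      have hsub : ∑ i ∈ Finset.univ.erase L, (x - q) i
          = (∑ i ∈ Finset.univ.erase L, x i) - ((d:ℤ) - 1) := by
        simp only [Pi.sub_apply, Finset.sum_sub_distrib, hsumq]
      have hxk1 : ∀ k, k ≠ L → 1 ≤ x k := by
        intro k hk
        by_contra hcon
        push_neg at hcon
        have : x k ≤ 0 := by omega
        have h2 := hD k hk
        nlinarith
      have hA' : ∀ i, i ≠ L → 0 ≤ (x - q) i := by
        intro i hi
        have := hxk1 i hi
        simp only [Pi.sub_apply, hqe i hi]; omega
      have hc1 : (((c:ℕ)+1:ℕ) : ℤ) = (c:ℤ) + 1 := by push_cast; ring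
      rw [hc1] at hB hC
      have hB' : (w:ℤ) * ((∑ i ∈ Finset.univ.erase L, (x - q) i) - c) ≤ (x - q) L := by
        rw [hsub]
        simp only [Pi.sub_apply, hqL]
        -- need : w * (s - (d-1) - c) ≤ x L - W , i.e. x L ≥ w*(s - (c+1)) + 1
        rcases le_or_gt (∑ i ∈ Finset.univ.erase L, x i) ((c:ℤ)+1) with h | h
        · have h0 : (0:ℤ) ≤ (w:ℤ) * (((c:ℤ)+1) - ∑ i ∈ Finset.univ.erase L, x i) := by
            apply mul_nonneg (by positivity); omega
          rw [hWdef]; nlinarith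
        · -- s ≥ c + 2
          have hu : (1:ℤ) ≤ (∑ i ∈ Finset.univ.erase L, x i) - ((c:ℤ)+1) := by omega
          rcases (by omega : (d:ℤ) - 2 = 0 ∨ 1 ≤ (d:ℤ) - 2) with h2 | h2
          · exfalso; rw [h2] at hC; nlinarith
          · have hpos : 0 < x L - (w:ℤ) * ((∑ i ∈ Finset.univ.erase L, x i) - ((c:ℤ)+1)) := by
              by_contra hcon
              push_neg at hcon
              nlinarith
            have : 1 ≤ x L - (w:ℤ) * ((∑ i ∈ Finset.univ.erase L, x i) - ((c:ℤ)+1)) := hpos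
            rw [hWdef]; nlinarith
      have hC' : (((d:ℤ)-2)*w+1) * ((∑ i ∈ Finset.univ.erase L, (x - q) i) - c)
          ≤ ((d:ℤ)-2) * ((x - q) L) := by
        rw [hsub]
        simp only [Pi.sub_apply, hqL, hWdef]
        nlinarith [hC]
      have hD' : ∀ k, k ≠ L → (x - q) L ≤ (((d:ℤ)-2)*w+1) * ((x - q) k) := by
        intro k hk
        simp only [Pi.sub_apply, hqL, hqe k hk, hWdef]
        have := hD k hk
        rw [hWdef] at this
        nlinarith
      obtain ⟨f, hf, hxf⟩ := ih (x - q) hA' hB' hC' hD'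
      refine ⟨Fin.cons q f, ?_, ?_⟩
      · intro j
        refine Fin.cases ?_ ?_ j
        · exact Or.inr (Or.inr (by simp only [Fin.cons_zero, hq, hWdef]))
        · intro j'; simpa using hf j'
      · rw [Fin.sum_cons, ← hxf]; abel
    · push_neg at hxL
      have hxL' : x L ≤ 0 := by omega
      exact keyP L w hw (c+1) x hA hxL' hB

section Real

def eRR {d : ℕ} (k : Fin d) : Fin d → ℝ := fun j => if j = k then (1:ℝ) else 0
def vLRR {d : ℕ} (L : Fin d) (w : ℕ) : Fin d → ℝ := fun j => if j = L then -(w : ℝ) else 0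
def zRR (d : ℕ) (L : Fin d) (w : ℕ) : Fin d → ℝ := fun i => if i = L then ((d:ℝ)-2)*w+1 else 1
def GsetR {d : ℕ} (L : Fin d) (w : ℕ) : Set (Fin d → ℝ) :=
  insert (vLRR L w) (insert 0 {x : Fin d → ℝ | ∃ i : Fin d, i ≠ L ∧
    x = fun j => if j = i then (1 : ℝ) else 0})

variable {d : ℕ} {L : Fin d} {w : ℕ}

lemma sum_erase_vL : ∑ i ∈ Finset.univ.erase L, vLRR L w i = 0 := by
  apply Finset.sum_eq_zero; intro i hi
  simp [vLRR, Finset.ne_of_mem_erase hi]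

lemma sum_erase_e {k : Fin d} (hk : k ≠ L) : ∑ i ∈ Finset.univ.erase L, eRR k i = 1 := by
  have : ∀ i ∈ Finset.univ.erase L, eRR k i = if i = k then (1:ℝ) else 0 := by
    intro i _; rfl
  rw [Finset.sum_congr rfl this, Finset.sum_ite_eq' (Finset.univ.erase L) k (fun _ => (1:ℝ))]
  simp [hk]

lemma sum_erase_z (hd : 1 ≤ d) : ∑ i ∈ Finset.univ.erase L, zRR d L w i = (d:ℝ) - 1 := by
  have : ∀ i ∈ Finset.univ.erase L, zRR d L w i = 1 := by
    intro i hi; simp [zRR, Finset.ne_of_mem_erase hi]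
  rw [Finset.sum_congr rfl this, Finset.sum_const, card_erase_univ, nsmul_eq_mul, mul_one]
  rw [Nat.cast_sub hd]; simp

lemma Q_bound {P Q : Set (Fin d → ℝ)}
    (hP : P = convexHull ℝ (GsetR L w)) (hQ : Q = convexHull ℝ (insert (zRR d L w) P))
    (ℓ : (Fin d → ℝ) → ℝ) (hlin : IsLinearMap ℝ ℓ) (b : ℝ) (h0 : 0 ≤ b)
    (hv : ℓ (vLRR L w) ≤ b) (he : ∀ k, k ≠ L → ℓ (eRR k) ≤ b) (hz : ℓ (zRR d L w) ≤ b) :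
    ∀ (c : ℕ), ∀ x ∈ (c:ℝ) • Q, ℓ x ≤ c * b := by
  have hconv : Convex ℝ {x : Fin d → ℝ | ℓ x ≤ b} := convex_halfSpace_le hlin b
  have hQsub : Q ⊆ {x | ℓ x ≤ b} := by
    rw [hQ]; apply convexHull_min _ hconv
    rintro v (rfl | hv')
    · exact hz
    · revert v
      rw [hP]
      apply convexHull_min _ hconv
      rintro v (rfl | rfl | ⟨i, hiL, rfl⟩)
      · exact hv
      · show ℓ 0 ≤ b
        rw [hlin.map_zero]; exact h0
      · exact he i hiL
  intro c x hx
  obtain ⟨y, hy, rfl⟩ := hx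
  rw [hlin.map_smul]
  have := hQsub hy
  calc (c:ℝ) • ℓ y = (c:ℝ) * ℓ y := smul_eq_mul _ _
    _ ≤ c * b := by
        apply mul_le_mul_of_nonneg_left this (by positivity)

lemma intIneqs {P Q : Set (Fin d → ℝ)} (hd : 2 ≤ d) (hw : 1 ≤ w)
    (hP : P = convexHull ℝ (GsetR L w)) (hQ : Q = convexHull ℝ (insert (zRR d L w) P))
    (c : ℕ) (ξ : Fin d → ℤ)
    (hmem : (fun i => ((ξ i : ℤ) : ℝ)) ∈ (c:ℝ) • Q) :
    (∀ i, i ≠ L → 0 ≤ ξ i) ∧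
    ((w:ℤ) * ((∑ i ∈ Finset.univ.erase L, ξ i) - c) ≤ ξ L) ∧
    ((((d:ℤ)-2)*w+1) * ((∑ i ∈ Finset.univ.erase L, ξ i) - c) ≤ ((d:ℤ)-2) * ξ L) ∧
    (∀ k, k ≠ L → ξ L ≤ (((d:ℤ)-2)*w+1) * ξ k) := by
  have hd2 : (2:ℝ) ≤ (d:ℝ) := by exact_mod_cast hd
  have hw1 : (1:ℝ) ≤ (w:ℝ) := by exact_mod_cast hw
  have hd1 : (1:ℕ) ≤ d := by omega
  have hsumcast : ∑ i ∈ Finset.univ.erase L, ((ξ i : ℤ):ℝ)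
      = ((∑ i ∈ Finset.univ.erase L, ξ i : ℤ) : ℝ) := by push_cast; rfl
  refine ⟨?_, ?_, ?_, ?_⟩
  · -- A
    intro k hk
    have hb := Q_bound hP hQ (fun x => -(x k)) ?_ 0 le_rfl ?_ ?_ ?_ c _ hmem
    · have : -((ξ k : ℤ):ℝ) ≤ 0 := by simpa using hb
      exact_mod_cast neg_nonpos.mp this
    · exact ⟨fun x y => by simp only [Pi.add_apply]; ring,
        fun r x => by simp only [Pi.smul_apply, smul_eq_mul]; ring⟩
    · simp [vLRR, hk]
    · intro k' _; by_cases h : k = k' <;> simp [eRR, h]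
    · simp [zRR, hk]
  · -- B
    have hb := Q_bound hP hQ
      (fun x => (w:ℝ) * (∑ i ∈ Finset.univ.erase L, x i) - x L) ?_ w (by positivity)
      ?_ ?_ ?_ c _ hmem
    · rw [hsumcast] at hb
      have h2 : (((w:ℤ) * ((∑ i ∈ Finset.univ.erase L, ξ i) - c) : ℤ) : ℝ)
          ≤ ((ξ L : ℤ) : ℝ) := by push_cast; push_cast at hb; linarith
      exact_mod_cast h2
    · constructor
      · intro x y
        simp only [Pi.add_apply, Finset.sum_add_distrib]; ring
      · intro r x
        simp only [Pi.smul_apply, smul_eq_mul, ← Finset.mul_sum]; ring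
    · rw [sum_erase_vL]; simp [vLRR]
    · intro k hk
      rw [sum_erase_e hk]
      simp [eRR, Ne.symm hk]
    · rw [sum_erase_z hd1]
      have hzL : zRR d L w L = ((d:ℝ)-2)*w+1 := by simp [zRR]
      rw [hzL]; nlinarith
  · -- C
    have hb := Q_bound hP hQ
      (fun x => (((d:ℝ)-2)*w+1) * (∑ i ∈ Finset.univ.erase L, x i) - ((d:ℝ)-2) * x L) ?_
      (((d:ℝ)-2)*w+1) (by nlinarith) ?_ ?_ ?_ c _ hmem
    · rw [hsumcast] at hb
      have h2 : (((((d:ℤ)-2)*w+1) * ((∑ i ∈ Finset.univ.erase L, ξ i) - c) : ℤ) : ℝ)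
          ≤ ((((d:ℤ)-2) * ξ L : ℤ) : ℝ) := by push_cast; push_cast at hb; linarith
      exact_mod_cast h2
    · constructor
      · intro x y
        simp only [Pi.add_apply, Finset.sum_add_distrib]; ring
      · intro r x
        simp only [Pi.smul_apply, smul_eq_mul, ← Finset.mul_sum]; ring
    · rw [sum_erase_vL]
      have hvL : vLRR L w L = -(w:ℝ) := by simp [vLRR]
      rw [hvL]; nlinarith
    · intro k hk
      rw [sum_erase_e hk]
      have : eRR k L = 0 := by simp [eRR, Ne.symm hk]
      rw [this]; ring_nf; nlinarith
    · rw [sum_erase_z hd1]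
      have hzL : zRR d L w L = ((d:ℝ)-2)*w+1 := by simp [zRR]
      rw [hzL]; nlinarith
  · -- D
    intro k hk
    have hb := Q_bound hP hQ
      (fun x => x L - (((d:ℝ)-2)*w+1) * x k) ?_ 0 le_rfl ?_ ?_ ?_ c _ hmem
    · have h2 : ((ξ L : ℤ):ℝ) ≤ (((((d:ℤ)-2)*w+1) * ξ k : ℤ) : ℝ) := by
        push_cast; push_cast at hb; linarith
      exact_mod_cast h2
    · constructor
      · intro x y; simp only [Pi.add_apply]; ring
      · intro r x; simp only [Pi.smul_apply, smul_eq_mul]; ring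
    · have hvL : vLRR L w L = -(w:ℝ) := by simp [vLRR]
      have h1 : vLRR L w k = 0 := by simp [vLRR, hk]
      rw [hvL, h1]; simp
    · intro i hi
      simp only [eRR]
      have h1 : (if L = i then (1:ℝ) else 0) = 0 := by simp [Ne.symm hi]
      rw [h1]
      by_cases h : k = i
      · simp [h]; nlinarith
      · simp [h]
    · have hzL : zRR d L w L = ((d:ℝ)-2)*w+1 := by simp [zRR]
      have h1 : zRR d L w k = 1 := by simp [zRR, hk]
      rw [hzL, h1]; ring_nf
      exact le_rfl
  
lemma hPQ {P Q : Set (Fin d → ℝ)}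
    (hP : P = convexHull ℝ (GsetR L w)) (hQ : Q = convexHull ℝ (insert (zRR d L w) P)) :
    P ⊆ Q := by
  rw [hQ]
  exact subset_trans (Set.subset_insert _ _) (subset_convexHull ℝ _)

lemma e_mem_P {P : Set (Fin d → ℝ)} (hP : P = convexHull ℝ (GsetR L w))
    {k : Fin d} (hk : k ≠ L) : eRR k ∈ P := by
  rw [hP]
  exact subset_convexHull ℝ _ (Or.inr (Or.inr ⟨k, hk, rfl⟩))

lemma vL_mem_P {P : Set (Fin d → ℝ)} (hP : P = convexHull ℝ (GsetR L w)) :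
    vLRR L w ∈ P := by
  rw [hP]; exact subset_convexHull ℝ _ (Or.inl rfl)

lemma tL_mem_P {P : Set (Fin d → ℝ)} (hP : P = convexHull ℝ (GsetR L w)) (hw : 1 ≤ w)
    {t : ℕ} (ht : t ≤ w) : (fun j => if j = L then -(t:ℝ) else 0) ∈ P := by
  have hw0 : (0:ℝ) < w := by positivity
  have hv : vLRR L w ∈ convexHull ℝ (GsetR L w) := subset_convexHull ℝ _ (Or.inl rfl)
  have h0 : (0 : Fin d → ℝ) ∈ convexHull ℝ (GsetR L w) :=
    subset_convexHull ℝ _ (Or.inr (Or.inl rfl))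
  have hθ0 : 0 ≤ (t:ℝ)/w := by positivity
  have hθ1 : 0 ≤ 1 - (t:ℝ)/w := by
    have : (t:ℝ)/w ≤ 1 := by
      rw [div_le_one hw0]; exact_mod_cast ht
    linarith
  have hcomb := (convex_convexHull ℝ (GsetR L w)) hv h0 hθ0 hθ1 (by ring)
  rw [hP]
  convert hcomb using 1
  funext j
  by_cases hj : j = L
  · simp [hj, vLRR, Pi.smul_apply]
    field_simp
  · simp [hj, vLRR, Pi.smul_apply]

lemma z_mem_Q {P Q : Set (Fin d → ℝ)}
    (hQ : Q = convexHull ℝ (insert (zRR d L w) P)) : zRR d L w ∈ Q := by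
  rw [hQ]; exact subset_convexHull ℝ _ (mem_insert _ _)

lemma genZ_cast_mem {P Q : Set (Fin d → ℝ)} (hw : 1 ≤ w)
    (hP : P = convexHull ℝ (GsetR L w)) (hQ : Q = convexHull ℝ (insert (zRR d L w) P))
    {q : Fin d → ℤ} (hq : GenZ L w q) :
    ((fun i => ((q i : ℤ) : ℝ)) ∈ Q) ∧ ((fun i => ((q i : ℤ) : ℝ)) = zRR d L w ∨
      (fun i => ((q i : ℤ) : ℝ)) ∈ P) := by
  rcases hq with ⟨k, hk, rfl⟩ | ⟨t, ht, rfl⟩ | rfl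
  · have he : (fun i => (((if i = k then (1:ℤ) else 0) : ℤ) : ℝ)) = eRR k := by
      funext i; by_cases h : i = k <;> simp [eRR, h]
    rw [he]
    exact ⟨hPQ hP hQ (e_mem_P hP hk), Or.inr (e_mem_P hP hk)⟩
  · have he : (fun i => (((if i = L then -(t:ℤ) else 0) : ℤ) : ℝ))
        = (fun j => if j = L then -(t:ℝ) else 0) := by
      funext i; by_cases h : i = L <;> simp [h]
    rw [he]
    exact ⟨hPQ hP hQ (tL_mem_P hP hw ht), Or.inr (tL_mem_P hP hw ht)⟩
  · have he : (fun i => (((if i = L then ((d:ℤ)-2)*w+1 else 1) : ℤ) : ℝ)) = zRR d L w := by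
      funext i; by_cases h : i = L <;> simp [zRR, h]
    rw [he]
    exact ⟨z_mem_Q hQ, Or.inl rfl⟩

lemma face_lemma {V : Set (Fin d → ℝ)} (g : (Fin d → ℝ) →ᵃ[ℝ] ℝ)
    (hg : ∀ v ∈ V, 0 ≤ g v) {x : Fin d → ℝ} (hx : x ∈ convexHull ℝ V) (hx0 : g x = 0) :
    x ∈ convexHull ℝ {v ∈ V | g v = 0} := by
  classical
  rw [_root_.convexHull_eq] at hx
  obtain ⟨ι, t, wt, zt, hw0, hw1, hzV, hcm⟩ := hx
  have hgsum : ∑ i ∈ t, wt i * g (zt i) = g x := by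
    rw [← hcm, Finset.centerMass_eq_of_sum_1 _ _ hw1]
    have h1 : g (∑ i ∈ t, wt i • zt i) = g.linear (∑ i ∈ t, wt i • zt i) + g 0 :=
      congrFun g.decomp _
    rw [h1, map_sum]
    have h2 : ∀ i ∈ t, g.linear (wt i • zt i) = wt i * (g (zt i) - g 0) := by
      intro i _
      rw [LinearMap.map_smul]
      have h3 : g (zt i) = g.linear (zt i) + g 0 := congrFun g.decomp _
      have h4 : g.linear (zt i) = g (zt i) - g 0 := by linarith
      rw [h4, smul_eq_mul]
    rw [Finset.sum_congr rfl h2]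
    have h5 : ∑ i ∈ t, wt i * (g (zt i) - g 0)
        = ∑ i ∈ t, wt i * g (zt i) - (∑ i ∈ t, wt i) * g 0 := by
      rw [Finset.sum_mul, ← Finset.sum_sub_distrib]
      exact Finset.sum_congr rfl (fun i _ => by ring)
    rw [h5, hw1]; ring
  rw [hx0] at hgsum
  have hterm : ∀ i ∈ t, wt i * g (zt i) = 0 := by
    exact (Finset.sum_eq_zero_iff_of_nonneg
      (fun i hi => mul_nonneg (hw0 i hi) (hg _ (hzV i hi)))).1 hgsum
  rw [← hcm, ← Finset.centerMass_filter_ne_zero]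
  apply Finset.centerMass_mem_convexHull
  · intro i hi; exact hw0 i (Finset.mem_filter.1 hi).1
  · rw [Finset.sum_filter_ne_zero, hw1]; norm_num
  · intro i hi
    obtain ⟨hit, hwne⟩ := Finset.mem_filter.1 hi
    refine ⟨hzV i hit, ?_⟩
    rcases mul_eq_zero.1 (hterm i hit) with h | h
    · exact absurd h hwne
    · exact h

/-- vertex enumeration -/
def pEnum (L : Fin d) (w : ℕ) : Option (Fin d) → (Fin d → ℝ) :=
  fun o => match o with
  | none => vLRR L w
  | some i => if i = L then 0 else eRR i

lemma Gset_sub_range : GsetR L w ⊆ Set.range (pEnum L w) := by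
  rintro v (rfl | rfl | ⟨i, hiL, rfl⟩)
  · exact ⟨none, rfl⟩
  · exact ⟨some L, by simp [pEnum]⟩
  · exact ⟨some i, by simp only [pEnum, if_neg hiL]; rfl⟩

lemma two_pos_contra (hd : 2 ≤ d) {P : Set (Fin d → ℝ)}
    (hP : P = convexHull ℝ (GsetR L w))
    (g : (Fin d → ℝ) →ᵃ[ℝ] ℝ) (hgP : ∀ x ∈ P, 0 ≤ g x)
    (hgdim : Module.finrank ℝ (affineSpan ℝ {x ∈ P | g x = 0}).direction = d - 1)
    (u u' : Fin d → ℝ) (hu : u ∈ GsetR L w) (hu' : u' ∈ GsetR L w) (huu : u ≠ u')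
    (hgu : 0 < g u) (hgu' : 0 < g u') : False := by
  classical
  obtain ⟨ju, hju⟩ := Gset_sub_range hu
  obtain ⟨ju', hju'⟩ := Gset_sub_range hu'
  have hjne : ju ≠ ju' := by
    rintro rfl; exact huu (hju ▸ hju' ▸ rfl)
  set T : Finset (Option (Fin d)) := (Finset.univ.erase ju).erase ju' with hT
  have hTcard : T.card = d - 1 := by
    rw [hT, Finset.card_erase_of_mem, Finset.card_erase_of_mem (Finset.mem_univ _)]
    · simp [Fintype.card_option]
    · exact Finset.mem_erase.2 ⟨Ne.symm hjne, Finset.mem_univ _⟩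
  have hsub : {v ∈ GsetR L w | g v = 0} ⊆ ↑(T.image (pEnum L w)) := by
    rintro v ⟨hvG, hv0⟩
    obtain ⟨j, hj⟩ := Gset_sub_range hvG
    have hjju : j ≠ ju := by
      rintro rfl; rw [hj] at hju; subst hju; linarith
    have hjju' : j ≠ ju' := by
      rintro rfl; rw [hj] at hju'; subst hju'; linarith
    exact Finset.mem_coe.2 (Finset.mem_image.2 ⟨j,
      Finset.mem_erase.2 ⟨hjju', Finset.mem_erase.2 ⟨hjju, Finset.mem_univ _⟩⟩, hj⟩)
  have h1 : {x ∈ P | g x = 0} ⊆ convexHull ℝ {v ∈ GsetR L w | g v = 0} := by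
    rintro x ⟨hxP, hx0⟩
    refine face_lemma g ?_ (hP ▸ hxP) hx0
    intro v hv
    exact hgP v (hP ▸ subset_convexHull ℝ _ hv)
  have h2 : affineSpan ℝ {x ∈ P | g x = 0}
      ≤ affineSpan ℝ (↑(T.image (pEnum L w)) : Set (Fin d → ℝ)) := by
    calc affineSpan ℝ {x ∈ P | g x = 0}
        ≤ affineSpan ℝ (convexHull ℝ {v ∈ GsetR L w | g v = 0}) := affineSpan_mono ℝ h1
      _ = affineSpan ℝ {v ∈ GsetR L w | g v = 0} := affineSpan_convexHull _
      _ ≤ _ := affineSpan_mono ℝ hsub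
  have h3 := AffineSubspace.direction_le h2
  have h4 : Module.finrank ℝ
      (affineSpan ℝ (↑(T.image (pEnum L w)) : Set (Fin d → ℝ))).direction ≤ d - 2 := by
    rw [direction_affineSpan]
    exact finrank_vectorSpan_image_finset_le ℝ (pEnum L w) T (by omega)
  have h5 := Submodule.finrank_mono h3
  rw [hgdim] at h5
  have := le_trans h5 h4
  omega

lemma g_decomp (g : (Fin d → ℝ) →ᵃ[ℝ] ℝ) (v : Fin d → ℝ) :
    g v = ∑ i, v i * (g (eRR i) - g 0) + g 0 := by
  have h1 : g v = g.linear v + g 0 := congrFun g.decomp _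
  have hrepr : v = ∑ i, v i • eRR i := by
    funext j
    rw [Finset.sum_apply]
    simp [eRR, Pi.smul_apply, mul_ite]
  rw [h1]
  conv_lhs => rw [hrepr]
  rw [map_sum]
  congr 1
  apply Finset.sum_congr rfl
  intro i _
  rw [LinearMap.map_smul, smul_eq_mul]
  have h2 : g (eRR i) = g.linear (eRR i) + g 0 := congrFun g.decomp _
  have h3 : g.linear (eRR i) = g (eRR i) - g 0 := by linarith
  rw [h3]

lemma conj4 (hd : 2 ≤ d) (hw : 1 ≤ w) {P : Set (Fin d → ℝ)}
    (hP : P = convexHull ℝ (GsetR L w))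
    (g : (Fin d → ℝ) →ᵃ[ℝ] ℝ)
    (hgP : ∀ x ∈ P, 0 ≤ g x)
    (hgint : ∀ x : Fin d → ℝ, (∀ i, ∃ n : ℤ, x i = n) → ∃ m : ℤ, g x = m)
    (hgsurj : ∀ m : ℤ, ∃ x : Fin d → ℝ, (∀ i, ∃ n : ℤ, x i = n) ∧ g x = m)
    (hgdim : Module.finrank ℝ (affineSpan ℝ {x ∈ P | g x = 0}).direction = d - 1)
    (hgz : g (zRR d L w) < 0) :
    (∀ x, g x = -(x L)) ∧ -(g (zRR d L w)) = ((d : ℝ) - 2) * w + 1 := by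
  have hd2 : (2:ℝ) ≤ (d:ℝ) := by exact_mod_cast hd
  have hw1 : (1:ℝ) ≤ (w:ℝ) := by exact_mod_cast hw
  have hw0 : (0:ℝ) < w := by linarith
  -- nonnegativity at the vertices
  have h0m : (0 : Fin d → ℝ) ∈ P := by
    rw [hP]; exact subset_convexHull ℝ _ (Or.inr (Or.inl rfl))
  have hg0 : 0 ≤ g 0 := hgP _ h0m
  have hgv : 0 ≤ g (vLRR L w) := hgP _ (vL_mem_P hP)
  have hge : ∀ k, k ≠ L → 0 ≤ g (eRR k) := fun k hk => hgP _ (e_mem_P hP hk)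
  -- vertex distinctness helpers
  have hvL_ne0 : vLRR L w ≠ 0 := by
    intro h
    have := congrFun h L
    simp [vLRR] at this
    linarith
  have hvL_nee : ∀ k, k ≠ L → vLRR L w ≠ eRR k := by
    intro k hk h
    have := congrFun h k
    simp [vLRR, eRR, hk] at this
  have h0_nee : ∀ k, (0 : Fin d → ℝ) ≠ eRR k := by
    intro k h
    have := congrFun h k
    simp [eRR] at this
  have he_nee : ∀ i k, i ≠ k → eRR i ≠ eRR (k : Fin d) := by
    intro i k hik h
    have := congrFun h i
    simp [eRR, hik] at this
  have hvmem : vLRR L w ∈ GsetR L w := Or.inl rfl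
  have h0mem : (0 : Fin d → ℝ) ∈ GsetR L w := Or.inr (Or.inl rfl)
  have hemem : ∀ k, k ≠ L → eRR k ∈ GsetR L w := fun k hk => Or.inr (Or.inr ⟨k, hk, rfl⟩)
  have htwo := two_pos_contra hd hP g hgP hgdim
  -- the L-th linear coefficient is determined by the vertex vL
  have hvdec : g (vLRR L w) = -(w:ℝ) * (g (eRR L) - g 0) + g 0 := by
    rw [g_decomp g (vLRR L w)]
    congr 1
    rw [Finset.sum_eq_single_of_mem L (Finset.mem_univ L)]
    · simp [vLRR]
    · intro i _ hiL
      simp [vLRR, hiL]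
  have hzdec : g (zRR d L w) = (((d:ℝ)-2)*w+1) * (g (eRR L) - g 0)
      + (∑ i ∈ Finset.univ.erase L, (g (eRR i) - g 0)) + g 0 := by
    rw [g_decomp g (zRR d L w)]
    rw [← Finset.add_sum_erase _ _ (Finset.mem_univ L)]
    have hL1 : zRR d L w L = ((d:ℝ)-2)*w+1 := by simp [zRR]
    have hrest : ∀ i ∈ Finset.univ.erase L, zRR d L w i * (g (eRR i) - g 0)
        = g (eRR i) - g 0 := by
      intro i hi
      have : zRR d L w i = 1 := by simp [zRR, Finset.ne_of_mem_erase hi]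
      rw [this, one_mul]
    rw [Finset.sum_congr rfl hrest, hL1]
  -- step 1 : all vertices eRR k (k ≠ L) vanish
  have hA : ∀ k, k ≠ L → g (eRR k) = 0 := by
    intro k hk
    rcases eq_or_lt_of_le (hge k hk) with h | hpos
    · exact h.symm
    exfalso
    -- all other vertices vanish
    have hg00 : g 0 = 0 := by
      rcases eq_or_lt_of_le hg0 with h | h
      · exact h.symm
      · exact absurd (htwo _ _ h0mem (hemem k hk) (h0_nee k) h hpos) not_false
    have hgv0 : g (vLRR L w) = 0 := by
      rcases eq_or_lt_of_le hgv with h | h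
      · exact h.symm
      · exact absurd (htwo _ _ hvmem (hemem k hk) (hvL_nee k hk) h hpos) not_false
    have hgei : ∀ i, i ≠ L → i ≠ k → g (eRR i) = 0 := by
      intro i hiL hik
      rcases eq_or_lt_of_le (hge i hiL) with h | h
      · exact h.symm
      · exact absurd (htwo _ _ (hemem i hiL) (hemem k hk) (he_nee i k hik) h hpos) not_false
    have hgeL : g (eRR L) = 0 := by
      rw [hg00] at hvdec
      have h1 : (w:ℝ) * g (eRR L) = 0 := by
        rw [hgv0] at hvdec; linarith
      have hwne : (w:ℝ) ≠ 0 := by linarith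
      rcases mul_eq_zero.1 h1 with h | h
      · exact absurd h hwne
      · exact h
    have hzval : g (zRR d L w) = g (eRR k) := by
      rw [hzdec, hg00, hgeL]
      have : ∑ i ∈ Finset.univ.erase L, (g (eRR i) - 0) = g (eRR k) := by
        rw [Finset.sum_eq_single_of_mem k (Finset.mem_erase.2 ⟨hk, Finset.mem_univ k⟩)]
        · simp
        · intro i hi hik
          simp [hgei i (Finset.ne_of_mem_erase hi) hik]
      rw [this]
      ring
    rw [hzval] at hgz
    linarith
  -- step 2 : the origin vanishes
  have hB0 : g 0 = 0 := by
    rcases eq_or_lt_of_le hg0 with h | hpos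
    · exact h.symm
    exfalso
    have hgv0 : g (vLRR L w) = 0 := by
      rcases eq_or_lt_of_le hgv with h | h
      · exact h.symm
      · exact absurd (htwo _ _ hvmem h0mem (Ne.symm hvL_ne0).symm h hpos) not_false
    -- from hvdec : 0 = -w*(g eL - g0) + g0
    have haL : g (eRR L) - g 0 = g 0 / w := by
      rw [hgv0] at hvdec
      field_simp
      nlinarith [hvdec]
    have hzval : g (zRR d L w) = g 0 / w := by
      rw [hzdec, haL]
      have hsum : ∑ i ∈ Finset.univ.erase L, (g (eRR i) - g 0)
          = -(((d:ℝ) - 1) * g 0) := by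
        have : ∀ i ∈ Finset.univ.erase L, g (eRR i) - g 0 = -(g 0) := by
          intro i hi
          rw [hA i (Finset.ne_of_mem_erase hi)]
          ring
        rw [Finset.sum_congr rfl this, Finset.sum_const, card_erase_univ, nsmul_eq_mul]
        have : ((d - 1 : ℕ) : ℝ) = (d:ℝ) - 1 := by
          rw [Nat.cast_sub (by omega : 1 ≤ d)]; simp
        rw [this]; ring
      rw [hsum]
      field_simp
      ring
    rw [hzval] at hgz
    have : 0 < g 0 / w := by positivity
    linarith
  -- step 3 : identify the functional
  have gform : ∀ v : Fin d → ℝ, g v = v L * g (eRR L) := by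
    intro v
    rw [g_decomp g v, hB0]
    rw [Finset.sum_eq_single_of_mem L (Finset.mem_univ L)]
    · simp
    · intro i _ hiL
      rw [hA i hiL]; ring
  obtain ⟨m, hm⟩ := hgint (eRR L) (fun i => by
    by_cases h : i = L
    · exact ⟨1, by simp [eRR, h]⟩
    · exact ⟨0, by simp [eRR, h]⟩)
  obtain ⟨x1, hx1lat, hx1⟩ := hgsurj 1
  obtain ⟨n, hn⟩ := hx1lat L
  have hmn : (m:ℝ) * n = 1 := by
    have := gform x1
    rw [hx1, hn, hm] at this
    push_cast at this
    linear_combination -this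
  have hmnZ : m * n = 1 := by exact_mod_cast hmn
  have hWpos : (0:ℝ) < ((d:ℝ)-2)*w+1 := by nlinarith
  have haLneg : g (eRR L) < 0 := by
    have := gform (zRR d L w)
    have hzL : zRR d L w L = ((d:ℝ)-2)*w+1 := by simp [zRR]
    rw [hzL] at this
    nlinarith [hgz, this]
  have hmneg : m = -1 := by
    rcases Int.eq_one_or_neg_one_of_mul_eq_one hmnZ with h | h
    · exfalso; rw [h] at hm; rw [hm] at haLneg; norm_num at haLneg
    · exact h
  have haL : g (eRR L) = -1 := by rw [hm, hmneg]; norm_num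
  constructor
  · intro x
    rw [gform x, haL]; ring
  · have := gform (zRR d L w)
    have hzL : zRR d L w L = ((d:ℝ)-2)*w+1 := by simp [zRR]
    rw [hzL, haL] at this
    rw [this]; ring

lemma conj3 (hw : 1 ≤ w) {P : Set (Fin d → ℝ)}
    (hP : P = convexHull ℝ (GsetR L w)) :
    sSup ((fun x => -(x L)) '' P) = (w : ℝ) := by
  apply IsGreatest.csSup_eq
  constructor
  · exact ⟨vLRR L w, vL_mem_P hP, by simp [vLRR]⟩
  · rintro y ⟨x, hxP, rfl⟩
    have hlin : IsLinearMap ℝ (fun x : Fin d → ℝ => -(x L)) := by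
      constructor
      · intro a b; simp only [Pi.add_apply]; ring
      · intro r a; simp only [Pi.smul_apply, smul_eq_mul]; ring
    have hsub : P ⊆ {x : Fin d → ℝ | -(x L) ≤ w} := by
      rw [hP]
      apply convexHull_min _ (convex_halfSpace_le hlin _)
      rintro v (rfl | rfl | ⟨i, hiL, rfl⟩)
      · simp [vLRR]
      · simp only [mem_setOf_eq, Pi.zero_apply, neg_zero]; positivity
      · simp only [mem_setOf_eq, Ne.symm hiL, if_false]
        have : (0:ℝ) ≤ w := by positivity
        simpa [Ne.symm hiL] using this
    exact hsub hxP

lemma lattice_choose {x : Fin d → ℝ} (hx : IsLatticePt x) :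
    ∃ ξ : Fin d → ℤ, x = fun i => ((ξ i : ℤ) : ℝ) := by
  choose ξ hξ using hx
  exact ⟨ξ, funext hξ⟩

lemma zpt_lattice (hd : 2 ≤ d) : IsLatticePt (zRR d L w) := by
  intro i
  by_cases h : i = L
  · refine ⟨((d:ℤ)-2)*w+1, ?_⟩
    simp only [zRR, h, if_pos rfl]
    push_cast
    ring
  · exact ⟨1, by simp [zRR, h]⟩

end Real

end Stmt17Aux

open Stmt17Aux

/-- Sharpness of the height bound: for `P = conv(0, e₁, …, e_{d-1}, -w·e_d)` and
`z = e₁ + ⋯ + e_{d-1} + ((d-2)w+1)·e_d`, the pair `(P, conv(P,z))` is a quantum jump,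
the horizontal facet `F` (with height function `x ↦ -x_d`) has `width_F P = w`, it is the
only facet of `P` visible from `z`, and `ht_P(z) = (d-2)w + 1`. -/
theorem stmt_17 (d : ℕ) (hd : 2 ≤ d) (L : Fin d) (w : ℕ) (hw : 1 ≤ w)
    (P : Set (Fin d → ℝ))
    (hP : P = convexHull ℝ
      (insert (fun j => if j = L then -(w : ℝ) else 0)
        (insert 0 {x : Fin d → ℝ | ∃ i : Fin d, i ≠ L ∧
          x = fun j => if j = i then (1 : ℝ) else 0})))
    (zpt : Fin d → ℝ)
    (hz : zpt = fun i => if i = L then ((d : ℝ) - 2) * w + 1 else 1)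
    (Q : Set (Fin d → ℝ)) (hQ : Q = convexHull ℝ (insert zpt P)) :
    -- (P, Q) is a quantum jump:
    {x ∈ Q | IsLatticePt x} = {x ∈ P | IsLatticePt x} ∪ {zpt} ∧
    IsNormal Q ∧
    -- width of P over the horizontal facet F is w:
    sSup ((fun x => -(x L)) '' P) = (w : ℝ) ∧
    -- F is the only facet of P visible from z, and ht_P(z) = (d-2)w + 1:
    (∀ g : (Fin d → ℝ) →ᵃ[ℝ] ℝ,
      (∀ x ∈ P, 0 ≤ g x) →
      (∀ x : Fin d → ℝ, IsLatticePt x → ∃ m : ℤ, g x = m) →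
      (∀ m : ℤ, ∃ x : Fin d → ℝ, IsLatticePt x ∧ g x = m) →
      Module.finrank ℝ (affineSpan ℝ {x ∈ P | g x = 0}).direction = d - 1 →
      g zpt < 0 →
      (∀ x, g x = -(x L)) ∧ -(g zpt) = ((d : ℝ) - 2) * w + 1) := by
  have hP' : P = convexHull ℝ (GsetR L w) := hP
  have hz' : zpt = zRR d L w := hz
  have hQ' : Q = convexHull ℝ (insert (zRR d L w) P) := by rw [hQ, hz']
  refine ⟨?_, ?_, ?_, ?_⟩
  · -- quantum jump lattice points
    ext x
    simp only [Set.mem_setOf_eq, Set.mem_union, Set.mem_singleton_iff]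
    constructor
    · rintro ⟨hxQ, hlat⟩
      obtain ⟨ξ, rfl⟩ := lattice_choose hlat
      have hmem1 : (fun i => ((ξ i : ℤ):ℝ)) ∈ ((1:ℕ):ℝ) • Q := by
        rw [Nat.cast_one, one_smul]; exact hxQ
      obtain ⟨hA, hB, hC, hD⟩ := intIneqs hd hw hP' hQ' 1 ξ hmem1
      obtain ⟨f, hf, hsum⟩ := keyQ L w hd hw 1 ξ hA hB hC hD
      have hx0 : ξ = f 0 := by rw [hsum, Fin.sum_univ_one]
      obtain ⟨hfq, hcase⟩ := genZ_cast_mem hw hP' hQ' (hf 0)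
      rcases hcase with heq | hmem
      · right; rw [hz', hx0]; exact heq
      · left
        refine ⟨?_, fun i => ⟨ξ i, rfl⟩⟩
        rw [hx0]; exact hmem
    · rintro (⟨hxP, hlat⟩ | rfl)
      · exact ⟨hPQ hP' hQ' hxP, hlat⟩
      · refine ⟨?_, ?_⟩
        · rw [hz']; exact z_mem_Q hQ'
        · rw [hz']; exact zpt_lattice hd
  · -- normality of Q
    intro c hc x hxc hlat
    obtain ⟨ξ, rfl⟩ := lattice_choose hlat
    obtain ⟨hA, hB, hC, hD⟩ := intIneqs hd hw hP' hQ' c ξ hxc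
    obtain ⟨f, hf, hsum⟩ := keyQ L w hd hw c ξ hA hB hC hD
    refine ⟨fun j => (fun i => ((f j i : ℤ):ℝ)), ?_, ?_⟩
    · intro j
      obtain ⟨hfq, _⟩ := genZ_cast_mem hw hP' hQ' (hf j)
      exact ⟨hfq, fun i => ⟨f j i, rfl⟩⟩
    · funext i
      have h1 : ξ i = ∑ j, f j i := by rw [hsum, Finset.sum_apply]
      show ((ξ i : ℤ) : ℝ) = _
      rw [Finset.sum_apply, h1]
      push_cast
      rfl
  · exact conj3 hw hP'
  · intro g hgP hgint hgsurj hgdim hgz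
    have h4 := conj4 hd hw hP' g hgP hgint hgsurj hgdim (by rw [← hz']; exact hgz)
    exact ⟨h4.1, by rw [hz']; exact h4.2⟩
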